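/- arXiv:2308.01376 — 3 statements merged into one kernel-verified Lean document; each statement's English description precedes it below -/
import Mathlib

section
/- For every integer N ≥ 5 and every integer k with 1 ≤ k ≤ N + 2, there do not exist transpositions t_1, …, t_k in the symmetric group S_N on {1, …, N} such that t_1 t_2 ⋯ t_k is the identity permutation and the subgroup of S_N generated by t_1, …, t_k acts transitively on {1, …, N}. -/
set_option linter.unusedSectionVars false

namespace Stmt1Aux

open Equiv Equiv.Perm

variable {α : Type*} [Fintype α] [DecidableEq α]

/-- Number of equivalence classes of a setoid. -/
noncomputable def cnt (s : Setoid α) : ℕ := Nat.card (Quotient s)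

/-- The setoid obtained from `r` by merging the classes of `x` and `y`. -/
def merge (r : Setoid α) (x y : α) : Setoid α where
  r z w := r z w ∨ ((r z x ∨ r z y) ∧ (r w x ∨ r w y))
  iseqv := by
    constructor
    · intro z; exact Or.inl (r.refl' z)
    · rintro z w (h | ⟨hz, hw⟩)
      · exact Or.inl (r.symm' h)
      · exact Or.inr ⟨hw, hz⟩
    · rintro a b c (hab | ⟨ha, hb⟩) (hbc | ⟨hb', hc⟩)
      · exact Or.inl (r.trans' hab hbc)
      · exact Or.inr ⟨hb'.imp (r.trans' hab) (r.trans' hab), hc⟩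
      · exact Or.inr ⟨ha, hb.imp (fun h => r.trans' (r.symm' hbc) h)
          (fun h => r.trans' (r.symm' hbc) h)⟩
      · exact Or.inr ⟨ha, hc⟩

lemma le_merge (r : Setoid α) (x y : α) : r ≤ merge r x y := fun _ _ h => Or.inl h

lemma merge_rel_self (r : Setoid α) (x y : α) : (merge r x y) x y :=
  Or.inr ⟨Or.inl (r.refl' x), Or.inr (r.refl' y)⟩

lemma merge_le_of_rel (r : Setoid α) {x y : α} (h : r x y) : merge r x y ≤ r := by
  rintro z w (hzw | ⟨hz, hw⟩)
  · exact hzw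
  · have hz' : r z x := hz.elim id (fun h' => r.trans' h' (r.symm' h))
    have hw' : r w x := hw.elim id (fun h' => r.trans' h' (r.symm' h))
    exact r.trans' hz' (r.symm' hw')

lemma cnt_le_cnt {r s : Setoid α} (h : r ≤ s) : cnt s ≤ cnt r := by
  have hsurj : Function.Surjective (Quotient.map' (id : α → α) (fun a b hab => h hab) :
      Quotient r → Quotient s) := by
    rintro ⟨z⟩; exact ⟨Quotient.mk'' z, rfl⟩
  exact Nat.card_le_card_of_surjective _ hsurj

lemma cnt_le_merge_add_one (r : Setoid α) (x y : α) :
    cnt r ≤ cnt (merge r x y) + 1 := by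
  classical
  set g : Quotient r → Quotient (merge r x y) :=
    Quotient.map' (id : α → α) (fun a b hab => le_merge r x y hab) with hg
  have key : ∀ a b : Quotient r, a ≠ Quotient.mk'' y → b ≠ Quotient.mk'' y →
      g a = g b → a = b := by
    rintro ⟨z⟩ ⟨w⟩ ha hb hgab
    have hzw : (merge r x y) z w := Quotient.eq''.mp hgab
    rcases hzw with hzw | ⟨hz, hw⟩
    · exact Quotient.sound' hzw
    · have hz' : r z x := by
        rcases hz with h | h
        · exact h
        · exact absurd (Quotient.sound' h) ha
      have hw' : r w x := by
        rcases hw with h | h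
        · exact h
        · exact absurd (Quotient.sound' h) hb
      exact Quotient.sound' (r.trans' hz' (r.symm' hw'))
  -- injection from the subtype of classes ≠ [y]
  have hinj : Function.Injective
      (fun a : {a : Quotient r // a ≠ Quotient.mk'' y} => g a.1) := by
    rintro ⟨a, ha⟩ ⟨b, hb⟩ hab
    exact Subtype.ext (key a b ha hb hab)
  have h1 : Nat.card {a : Quotient r // a ≠ Quotient.mk'' y} ≤ cnt (merge r x y) :=
    Nat.card_le_card_of_injective _ hinj
  have h2 : Nat.card {a : Quotient r // a ≠ Quotient.mk'' y} + 1 = cnt r := by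
    rw [cnt]
    rw [Nat.card_eq_fintype_card, Nat.card_eq_fintype_card]
    rw [Fintype.card_subtype_compl (p := fun a => a = Quotient.mk'' y)]
    rw [Fintype.card_subtype_eq]
    have : 1 ≤ Fintype.card (Quotient r) := Fintype.card_pos_iff.mpr ⟨Quotient.mk'' y⟩
    omega
  omega

lemma cnt_merge_lt (r : Setoid α) {x y : α} (h : ¬ r x y) :
    cnt (merge r x y) < cnt r := by
  classical
  set g : Quotient r → Quotient (merge r x y) :=
    Quotient.map' (id : α → α) (fun a b hab => le_merge r x y hab) with hg
  have hsurj : Function.Surjective g := by rintro ⟨z⟩; exact ⟨Quotient.mk'' z, rfl⟩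
  have hnotinj : ¬ Function.Injective g := by
    intro hinj
    have : (Quotient.mk'' x : Quotient r) = Quotient.mk'' y := by
      apply hinj
      exact Quotient.sound' (merge_rel_self r x y)
    exact h (Quotient.eq''.mp this)
  rw [cnt, cnt, Nat.card_eq_fintype_card, Nat.card_eq_fintype_card]
  exact Fintype.card_lt_of_surjective_not_injective _ hsurj hnotinj

lemma cnt_eq_card_of_eq {s : Setoid α} (h : ∀ z w, s z w → z = w) :
    cnt s = Fintype.card α := by
  have hbij : Function.Bijective (Quotient.mk'' : α → Quotient s) :=
    ⟨fun a b hab => h a b (Quotient.eq''.mp hab), fun q => q.inductionOn' fun a => ⟨a, rfl⟩⟩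
  rw [cnt, Nat.card_congr (Equiv.ofBijective _ hbij).symm, Nat.card_eq_fintype_card]

lemma cnt_eq_one_of_total [Nonempty α] {s : Setoid α} (h : ∀ z w, s z w) :
    cnt s = 1 := by
  haveI : Subsingleton (Quotient s) := by
    constructor; rintro ⟨a⟩ ⟨b⟩; exact Quotient.sound' (h a b)
  haveI : Nonempty (Quotient s) := ⟨Quotient.mk'' (Classical.arbitrary α)⟩
  rw [cnt, Nat.card_eq_one_iff_unique]; exact ⟨inferInstance, inferInstance⟩

/-- Generic closure induction: if the relation holds from `z` to `g z` for generators,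
it holds for all elements of the closure. -/
lemma closure_rel {S : Set (Perm α)} {P : Setoid α}
    (h1 : ∀ g ∈ S, ∀ z, P z (g z)) :
    ∀ g ∈ Subgroup.closure S, ∀ z, P z (g z) := by
  intro g hg
  induction hg using Subgroup.closure_induction with
  | mem g hgS => exact h1 g hgS
  | one => intro z; simpa using P.refl' z
  | mul g h _ _ ihg ihh =>
    intro z
    have h1 : P z (h z) := ihh z
    have h2 : P (h z) (g (h z)) := ihg (h z)
    simpa [Perm.mul_apply] using P.trans' h1 h2
  | inv g _ ihg =>
    intro z
    have := ihg (g⁻¹ z)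
    rw [show g (g⁻¹ z) = z from g.apply_symm_apply z] at this
    exact P.symm' this

/-- The same-cycle setoid of a permutation. -/
def sc (σ : Perm α) : Setoid α := ⟨σ.SameCycle, ⟨SameCycle.refl σ, SameCycle.symm, SameCycle.trans⟩⟩

lemma sc_apply_self (σ : Perm α) (z : α) : σ.SameCycle z (σ z) := ⟨1, by simp⟩

lemma sc_apply_self' (σ : Perm α) (z : α) : σ.SameCycle (σ z) z := (sc_apply_self σ z).symm

/-- The orbit setoid of a subgroup of permutations. -/
def orb (H : Subgroup (Perm α)) : Setoid α where
  r z w := ∃ g ∈ H, g z = w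
  iseqv := by
    constructor
    · intro z; exact ⟨1, one_mem H, rfl⟩
    · rintro z w ⟨g, hg, rfl⟩
      exact ⟨g⁻¹, inv_mem hg, g.symm_apply_apply z⟩
    · rintro a b c ⟨g, hg, rfl⟩ ⟨g', hg', rfl⟩
      exact ⟨g' * g, mul_mem hg' hg, rfl⟩

lemma sc_le_orb {σ : Perm α} {H : Subgroup (Perm α)} (hσ : σ ∈ H) : sc σ ≤ orb H := by
  rintro z w ⟨n, hn⟩
  exact ⟨σ ^ n, zpow_mem hσ n, hn⟩

lemma orb_mono {H K : Subgroup (Perm α)} (h : H ≤ K) : orb H ≤ orb K := by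
  rintro z w ⟨g, hg, rfl⟩; exact ⟨g, h hg, rfl⟩

/-- Multiplying by a swap joins same-cycle classes at worst at `x, y`. -/
lemma sc_mul_swap_le_merge (σ : Perm α) (x y : α) :
    sc (σ * Equiv.swap x y) ≤ merge (sc σ) x y := by
  have hgen : ∀ z, (merge (sc σ) x y) z ((σ * Equiv.swap x y) z) := by
    intro z
    rw [Perm.mul_apply]
    rcases eq_or_ne z x with rfl | hzx
    · rw [Equiv.swap_apply_left]
      exact Or.inr ⟨Or.inl (SameCycle.refl σ z), Or.inr (sc_apply_self' σ y)⟩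
    · rcases eq_or_ne z y with rfl | hzy
      · rw [Equiv.swap_apply_right]
        exact Or.inr ⟨Or.inr (SameCycle.refl σ z), Or.inl (sc_apply_self' σ x)⟩
      · rw [Equiv.swap_apply_of_ne_of_ne hzx hzy]
        exact Or.inl (sc_apply_self σ z)
  have key : ∀ g ∈ Subgroup.closure {σ * Equiv.swap x y},
      ∀ z, (merge (sc σ) x y) z (g z) := by
    apply closure_rel
    intro g hg z
    rw [Set.mem_singleton_iff] at hg
    rw [hg]
    exact hgen z
  rintro z w ⟨n, hn⟩
  have hmem : (σ * Equiv.swap x y) ^ n ∈ Subgroup.closure {σ * Equiv.swap x y} :=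
    zpow_mem (Subgroup.subset_closure (Set.mem_singleton _)) n
  have := key ((σ * Equiv.swap x y) ^ n) hmem z
  rwa [hn] at this

/-- If `x` and `y` are in different cycles of `σ`, then `x` and `y` are in the same
cycle of `σ * swap x y`. -/
lemma sameCycle_mul_swap (σ : Perm α) {x y : α} (hxy : ¬ σ.SameCycle x y) :
    (σ * Equiv.swap x y).SameCycle x y := by
  have hne : x ≠ y := fun h => hxy (h ▸ SameCycle.refl σ x)
  have hex : ∃ n, 0 < n ∧ (σ ^ n) y = y :=
    ⟨orderOf σ, orderOf_pos σ, by simp [pow_orderOf_eq_one]⟩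
  set p := Nat.find hex with hp
  obtain ⟨hp0, hpy⟩ : 0 < p ∧ (σ ^ p) y = y := Nat.find_spec hex
  have hmin : ∀ i, 0 < i → i < p → (σ ^ i) y ≠ y := fun i h1 h2 hy =>
    Nat.find_min hex h2 ⟨h1, hy⟩
  have key : ∀ i, 1 ≤ i → i ≤ p → ((σ * Equiv.swap x y) ^ i) x = (σ ^ i) y := by
    intro i
    induction i with
    | zero => omega
    | succ i ih =>
      intro _ hle
      by_cases hi : i = 0
      · subst hi
        simp [Perm.mul_apply]
      · have h1i : 1 ≤ i := Nat.one_le_iff_ne_zero.mpr hi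
        have hip : i < p := hle
        have hiy := ih h1i (le_of_lt hip)
        have hny : (σ ^ i) y ≠ y := hmin i h1i hip
        have hnx : (σ ^ i) y ≠ x := by
          intro h
          exact hxy (SameCycle.symm ⟨(i : ℤ), by rw [zpow_natCast, h]⟩)
        calc ((σ * Equiv.swap x y) ^ (i + 1)) x
            = (σ * Equiv.swap x y) (((σ * Equiv.swap x y) ^ i) x) := by
              rw [pow_succ', Perm.mul_apply]
          _ = (σ * Equiv.swap x y) ((σ ^ i) y) := by rw [hiy]
          _ = σ ((σ ^ i) y) := by
              rw [Perm.mul_apply, Equiv.swap_apply_of_ne_of_ne hnx hny]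
          _ = (σ ^ (i + 1)) y := by rw [pow_succ', Perm.mul_apply]
  exact ⟨(p : ℤ), by rw [zpow_natCast, key p hp0 le_rfl, hpy]⟩

/-- In the merging case, the merged setoid is below the same-cycle setoid of the product. -/
lemma merge_le_sc_mul_swap (σ : Perm α) {x y : α} (hxy : ¬ σ.SameCycle x y) :
    merge (sc σ) x y ≤ sc (σ * Equiv.swap x y) := by
  set σ' := σ * Equiv.swap x y with hσ'
  have hC1 : σ'.SameCycle x y := sameCycle_mul_swap σ hxy
  have hne : x ≠ y := fun h => hxy (h ▸ SameCycle.refl σ x)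
  -- (C2): sc σ ≤ sc σ'
  have hC2 : ∀ z, σ'.SameCycle z (σ z) := by
    intro z
    by_cases hzx : z = x
    · subst hzx
      have h1 : σ' y = σ z := by simp [hσ', Perm.mul_apply]
      exact hC1.trans ⟨1, by simpa using h1⟩
    · by_cases hzy : z = y
      · subst hzy
        have h1 : σ' x = σ z := by simp [hσ', Perm.mul_apply]
        exact hC1.symm.trans ⟨1, by simpa using h1⟩
      · have h1 : σ' z = σ z := by
          simp [hσ', Perm.mul_apply, Equiv.swap_apply_of_ne_of_ne hzx hzy]
        exact ⟨1, by simpa using h1⟩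
  have hle : sc σ ≤ sc σ' := by
    have key : ∀ g ∈ Subgroup.closure {σ}, ∀ z, (sc σ') z (g z) := by
      apply closure_rel
      rintro g rfl z
      exact hC2 z
    rintro z w ⟨n, hn⟩
    have hmem : σ ^ n ∈ Subgroup.closure {σ} :=
      zpow_mem (Subgroup.subset_closure (Set.mem_singleton _)) n
    have := key (σ ^ n) hmem z
    rwa [hn] at this
  rintro z w (hzw | ⟨hz, hw⟩)
  · exact hle hzw
  · have hz' : σ'.SameCycle z x := by
      rcases hz with h | h
      · exact hle h
      · exact (hle h).trans hC1.symm
    have hw' : σ'.SameCycle w x := by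
      rcases hw with h | h
      · exact hle h
      · exact (hle h).trans hC1.symm
    exact hz'.trans hw'.symm

end Stmt1Aux

open Stmt1Aux Equiv Equiv.Perm in
theorem stmt1 (N k : ℕ) (hN : 5 ≤ N) (hk : 1 ≤ k) (hkN : k ≤ N + 2) :
    ¬ ∃ t : Fin k → Equiv.Perm (Fin N),
      (∀ j, (t j).IsSwap) ∧
      (List.ofFn t).prod = 1 ∧
      (∀ i j : Fin N, ∃ h ∈ Subgroup.closure (Set.range t), h i = j) := by
  rintro ⟨t, hswap, hprod, htrans⟩
  classical
  haveI : Nonempty (Fin N) := ⟨⟨0, by omega⟩⟩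
  -- generator sets, subgroups, prefix products
  set G : ℕ → Set (Perm (Fin N)) := fun j => {g | ∃ i : Fin k, i.val < j ∧ t i = g} with hG
  set H : ℕ → Subgroup (Perm (Fin N)) := fun j => Subgroup.closure (G j) with hH
  set σ : ℕ → Perm (Fin N) := fun j => ((List.ofFn t).take j).prod with hσ
  set c : ℕ → ℕ := fun j => cnt (sc (σ j)) with hc
  set o : ℕ → ℕ := fun j => cnt (orb (H j)) with ho
  have hGmono : ∀ j, G j ⊆ G (j + 1) := by
    rintro j g ⟨i, hi, rfl⟩; exact ⟨i, by omega, rfl⟩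
  have hσ0 : σ 0 = 1 := by simp [hσ]
  have hσsucc : ∀ j (hj : j < k), σ (j + 1) = σ j * t ⟨j, hj⟩ := by
    intro j hj
    have hlen : j < (List.ofFn t).length := by simpa using hj
    have := List.prod_take_succ (List.ofFn t) j hlen
    rw [hσ]
    simp only []
    rw [this]
    congr 1
    simp
  have hσmem : ∀ j, σ j ∈ H j := by
    intro j
    induction j with
    | zero => rw [hσ0]; exact one_mem _
    | succ j ih =>
      by_cases hj : j < k
      · rw [hσsucc j hj]
        refine mul_mem ?_ ?_
        · exact Subgroup.closure_mono (hGmono j) ih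
        · exact Subgroup.subset_closure ⟨⟨j, hj⟩, by simp, rfl⟩
      · have : σ (j + 1) = σ j := by
          rw [hσ]
          simp only []
          rw [List.take_of_length_le (by simpa using by omega : (List.ofFn t).length ≤ j + 1),
            List.take_of_length_le (by simpa using by omega : (List.ofFn t).length ≤ j)]
        rw [this]
        exact Subgroup.closure_mono (hGmono j) ih
  -- base values
  have hc0 : c 0 = N := by
    rw [hc]
    simp only []
    rw [hσ0]
    have : cnt (sc (1 : Perm (Fin N))) = Fintype.card (Fin N) := by
      apply cnt_eq_card_of_eq
      intro z w h
      exact (Equiv.Perm.sameCycle_one).mp h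
    rw [this, Fintype.card_fin]
  have hck : c k = N := by
    have hσk : σ k = 1 := by
      rw [hσ]
      simp only []
      rw [List.take_of_length_le (by simp)]
      exact hprod
    rw [hc]
    simp only []
    rw [hσk]
    have : cnt (sc (1 : Perm (Fin N))) = Fintype.card (Fin N) := by
      apply cnt_eq_card_of_eq
      intro z w h
      exact (Equiv.Perm.sameCycle_one).mp h
    rw [this, Fintype.card_fin]
  have ho0 : o 0 = N := by
    rw [ho]
    simp only []
    have : cnt (orb (H 0)) = Fintype.card (Fin N) := by
      apply cnt_eq_card_of_eq
      rintro z w ⟨g, hg, rfl⟩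
      have : H 0 = ⊥ := by
        rw [hH]
        simp only []
        have hempty : G 0 = ∅ := by
          rw [hG]
          ext g
          simp only [Set.mem_setOf_eq, Set.mem_empty_iff_false, iff_false]
          rintro ⟨i, hi, _⟩; omega
        rw [hempty, Subgroup.closure_empty]
      rw [this, Subgroup.mem_bot] at hg
      rw [hg]
      simp
    rw [this, Fintype.card_fin]
  have hok : o k = 1 := by
    rw [ho]
    apply cnt_eq_one_of_total
    intro z w
    have hrange : Set.range t = G k := by
      ext g
      constructor
      · rintro ⟨i, rfl⟩; exact ⟨i, i.isLt, rfl⟩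
      · rintro ⟨i, _, rfl⟩; exact ⟨i, rfl⟩
    obtain ⟨g, hg, hgz⟩ := htrans z w
    rw [hrange] at hg
    exact ⟨g, hg, hgz⟩
  -- the invariant
  have inv : ∀ j, j ≤ k → (N : ℤ) + c j ≤ j + 2 * o j := by
    intro j
    induction j with
    | zero => intro _; rw [hc0, ho0]; push_cast; omega
    | succ j ih =>
      intro hjk
      have hj : j < k := hjk
      have IH := ih (le_of_lt hj)
      obtain ⟨x, y, hne, hxy⟩ := hswap ⟨j, hj⟩
      have hstep : σ (j + 1) = σ j * Equiv.swap x y := by rw [hσsucc j hj, hxy]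
      have hback : σ j = σ (j + 1) * Equiv.swap x y := by
        rw [hstep, mul_assoc, Equiv.swap_mul_self, mul_one]
      -- generic: c j ≤ c (j+1) + 1
      have hty : ∀ z, (merge (orb (H j)) x y) z ((Equiv.swap x y) z) := by
        intro z
        rcases eq_or_ne z x with rfl | hzx
        · rw [Equiv.swap_apply_left]
          exact merge_rel_self _ z y
        · rcases eq_or_ne z y with rfl | hzy
          · rw [Equiv.swap_apply_right]
            exact (merge (orb (H j)) x z).symm' (merge_rel_self _ x z)
          · rw [Equiv.swap_apply_of_ne_of_ne hzx hzy]
            try exact (merge (orb (H j)) x y).refl' z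
      have horb_le : orb (H (j + 1)) ≤ merge (orb (H j)) x y := by
        have key : ∀ g ∈ H (j + 1), ∀ z, (merge (orb (H j)) x y) z (g z) := by
          rw [hH]
          apply closure_rel
          rintro g ⟨i, hi, rfl⟩ z
          by_cases hij : i.val < j
          · exact Or.inl ⟨t i, Subgroup.subset_closure ⟨i, hij, rfl⟩, rfl⟩
          · have hieq : (i : ℕ) = j := by omega
            have : i = ⟨j, hj⟩ := Fin.ext (by simp [hieq])
            rw [this, hxy]
            exact hty z
        rintro z w ⟨g, hg, rfl⟩
        exact key g hg z
      have hosucc_le : o (j + 1) ≤ o j :=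
        cnt_le_cnt (orb_mono (Subgroup.closure_mono (hGmono j)))
      by_cases hxyorb : (orb (H j)) x y
      · -- no merge: o (j+1) ≥ o j, c (j+1) ≤ c j + 1
        have ho_ge : o j ≤ o (j + 1) := by
          apply cnt_le_cnt
          exact le_trans horb_le (merge_le_of_rel _ hxyorb)
        have hc_le : c (j + 1) ≤ c j + 1 := by
          have h1 : sc (σ j) ≤ merge (sc (σ (j + 1))) x y := by
            have := sc_mul_swap_le_merge (σ (j + 1)) x y
            rwa [← hback] at this
          calc c (j + 1) ≤ cnt (merge (sc (σ (j + 1))) x y) + 1 :=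
                cnt_le_merge_add_one _ x y
            _ ≤ c j + 1 := by exact Nat.add_le_add_right (cnt_le_cnt h1) 1
        push_cast at IH ⊢
        omega
      · -- merge case
        have hnsc : ¬ (σ j).SameCycle x y := by
          intro h
          exact hxyorb (sc_le_orb (hσmem j) h)
        have hc_lt : c (j + 1) < c j := by
          have h1 : merge (sc (σ j)) x y ≤ sc (σ (j + 1)) := by
            have := merge_le_sc_mul_swap (σ j) hnsc
            rwa [← hstep] at this
          calc c (j + 1) ≤ cnt (merge (sc (σ j)) x y) := cnt_le_cnt h1
            _ < c j := cnt_merge_lt _ hnsc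
        have ho_ge : o j ≤ o (j + 1) + 1 := by
          calc o j ≤ cnt (merge (orb (H j)) x y) + 1 := cnt_le_merge_add_one _ x y
            _ ≤ o (j + 1) + 1 := Nat.add_le_add_right (cnt_le_cnt horb_le) 1
        push_cast at IH ⊢
        omega
  have := inv k le_rfl
  rw [hck, hok] at this
  push_cast at this
  omega
end

section
/- Let N ≥ 3 be an integer and let λ, γ ∈ ℂ be roots of unity with λ ≠ 1. If λ^{-1}(γ + N − 1) is an integer (that is, it lies in the image of ℤ in ℂ), then λ = −1 and either γ = 1 or γ = −1. -/
theorem stmt5 (N : ℕ) (hN : 3 ≤ N) (lam gam : ℂ)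
    (hlam : ∃ n : ℕ, 0 < n ∧ lam ^ n = 1)
    (hgam : ∃ n : ℕ, 0 < n ∧ gam ^ n = 1)
    (hlam1 : lam ≠ 1)
    (hint : ∃ z : ℤ, lam⁻¹ * (gam + (N : ℂ) - 1) = (z : ℂ)) :
    lam = -1 ∧ (gam = 1 ∨ gam = -1) := by
  obtain ⟨n, hn, hln⟩ := hlam
  obtain ⟨k, hk, hgk⟩ := hgam
  obtain ⟨z, hz⟩ := hint
  have hl1 : ‖lam‖ = 1 := Complex.norm_eq_one_of_pow_eq_one hln hn.ne'
  have hg1 : ‖gam‖ = 1 := Complex.norm_eq_one_of_pow_eq_one hgk hk.ne'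
  have hlam0 : lam ≠ 0 := by
    intro h; rw [h] at hl1; simp at hl1
  have hinv : lam * lam⁻¹ = 1 := mul_inv_cancel₀ hlam0
  have hγ : gam = lam * z - (N : ℂ) + 1 := by
    have := congrArg (lam * ·) hz
    field_simp at this
    linear_combination this
  have hconj : (starRingEnd ℂ) lam = lam⁻¹ := (Complex.inv_eq_conj hl1).symm
  have hns : Complex.normSq gam = 1 := by
    rw [Complex.normSq_eq_norm_sq, hg1]; norm_num
  have hmc : gam * (starRingEnd ℂ) gam = 1 := by
    rw [Complex.mul_conj, hns, Complex.ofReal_one]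
  -- key equation in terms of t = lam + lam⁻¹
  have key : (z:ℂ)^2 - (lam + lam⁻¹) * z * ((N:ℂ)-1) + ((N:ℂ)-1)^2 - 1 = 0 := by
    have h2 : (lam * z - (N : ℂ) + 1) * (lam⁻¹ * z - (N:ℂ) + 1) = 1 := by
      rw [hγ] at hmc
      simp only [map_sub, map_add, map_mul, map_one, hconj, map_intCast, map_natCast] at hmc
      linear_combination hmc
    linear_combination h2 - (z:ℂ)^2 * hinv
  -- z ≠ 0
  have hz0 : z ≠ 0 := by
    intro h
    rw [h] at key
    push_cast at key
    have hNc : ((N:ℂ)) * ((N:ℂ) - 2) = 0 := by linear_combination key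
    rcases mul_eq_zero.mp hNc with h1 | h1
    · have : N = 0 := by exact_mod_cast h1
      omega
    · have : (N:ℂ) = ((2:ℕ):ℂ) := by push_cast; linear_combination h1
      have : N = 2 := by exact_mod_cast this
      omega
  have hN1 : ((N:ℚ) - 1) ≠ 0 := by
    have : (3:ℚ) ≤ (N:ℚ) := by exact_mod_cast hN
    intro h; nlinarith
  have hzq : (z:ℚ) ≠ 0 := by exact_mod_cast hz0
  -- rationality of t := lam + lam⁻¹
  set q : ℚ := ((z:ℚ)^2 + ((N:ℚ) - 1)^2 - 1) / (((N:ℚ) - 1) * (z:ℚ)) with hqdef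
  have hq : lam + lam⁻¹ = ((q:ℚ) : ℂ) := by
    have hNC : ((N:ℂ) - 1) ≠ 0 := by
      intro h
      have h2 : (N:ℂ) = ((1:ℕ):ℂ) := by push_cast; linear_combination h
      have : N = 1 := by exact_mod_cast h2
      omega
    have hzC : (z:ℂ) ≠ 0 := by exact_mod_cast hz0
    rw [hqdef]
    push_cast
    rw [eq_div_iff (mul_ne_zero hNC hzC)]
    linear_combination -key
  -- lam and lam⁻¹ are algebraic integers
  have hil : IsIntegral ℤ lam := ⟨Polynomial.X ^ n - 1,
    Polynomial.monic_X_pow_sub_C 1 hn.ne', by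
      simp [Polynomial.eval₂_sub, hln]⟩
  have hinvpow : lam⁻¹ = lam ^ (n - 1) := by
    field_simp
    rw [← pow_succ', Nat.sub_add_cancel hn]
    exact hln.symm
  have hii : IsIntegral ℤ (lam + lam⁻¹) := hil.add (hinvpow ▸ hil.pow (n-1))
  -- hence q is an integer
  have hiq : IsIntegral ℤ q := by
    rw [← isIntegral_algebraMap_iff (algebraMap ℚ ℂ).injective]
    show IsIntegral ℤ (algebraMap ℚ ℂ q)
    have : algebraMap ℚ ℂ q = lam + lam⁻¹ := by rw [hq]; rfl
    rw [this]; exact hii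
  obtain ⟨m, hm⟩ := IsIntegrallyClosed.isIntegral_iff.mp hiq
  have hm' : (m:ℚ) = q := by exact_mod_cast hm
  have hmq : lam + lam⁻¹ = ((m:ℤ):ℂ) := by
    rw [hq, ← hm']; push_cast; ring
  -- bound on m
  have h2re : lam + lam⁻¹ = ((2*lam.re : ℝ):ℂ) := by
    rw [← hconj, Complex.add_conj]
  have hreR : ((m:ℤ):ℝ) = 2 * lam.re := by
    have : (((m:ℤ):ℝ):ℂ) = ((2*lam.re : ℝ):ℂ) := by
      rw [← h2re]; exact_mod_cast hmq.symm
    exact_mod_cast this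
  have habs : |lam.re| ≤ 1 := by
    have := Complex.abs_re_le_norm lam
    rwa [hl1] at this
  have hmb : -2 ≤ m ∧ m ≤ 2 := by
    rcases abs_le.mp habs with ⟨h1, h2⟩
    constructor <;> [exact_mod_cast (by linarith [hreR] : (-2:ℝ) ≤ ((m:ℤ):ℝ));
      exact_mod_cast (by linarith [hreR] : ((m:ℤ):ℝ) ≤ 2)]
  -- integer key equation
  rw [hmq] at key
  have keyZ : z^2 - m*z*((N:ℤ)-1) + ((N:ℤ)-1)^2 - 1 = 0 := by exact_mod_cast key
  have hN3 : (3:ℤ) ≤ (N:ℤ) := by exact_mod_cast hN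
  obtain ⟨hmlo, hmhi⟩ := hmb
  interval_cases m
  · -- m = -2
    have hmq' : lam + lam⁻¹ = -2 := by rw [hmq]; norm_num
    have hp : (lam + 1)^2 = 0 := by linear_combination lam * hmq' - hinv
    have hlv : lam = -1 := by
      have := pow_eq_zero_iff (n := 2) (by norm_num) |>.mp hp
      linear_combination this
    refine ⟨hlv, ?_⟩
    have hsq : (z + (N:ℤ) - 1) * (z + (N:ℤ) - 1) = 1 := by linear_combination keyZ
    rcases mul_self_eq_one_iff.mp hsq with h | h
    · right
      have hz2 : (z:ℂ) = 2 - (N:ℂ) := by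
        have h' : z = 2 - (N:ℤ) := by omega
        rw [h']; push_cast; ring
      rw [hγ, hlv, hz2]; ring
    · left
      have hz2 : (z:ℂ) = -(N:ℂ) := by
        have h' : z = -(N:ℤ) := by omega
        rw [h']; push_cast; ring
      rw [hγ, hlv, hz2]; ring
  · exfalso; nlinarith [sq_nonneg (2*z + ((N:ℤ)-1))]
  · exfalso; nlinarith [sq_nonneg z]
  · exfalso; nlinarith [sq_nonneg (2*z - ((N:ℤ)-1))]
  · -- m = 2
    exfalso
    have hmq' : lam + lam⁻¹ = 2 := by rw [hmq]; norm_num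
    have hp : (lam - 1)^2 = 0 := by linear_combination lam * hmq' - hinv
    have : lam = 1 := by
      have := pow_eq_zero_iff (n := 2) (by norm_num) |>.mp hp
      linear_combination this
    exact hlam1 this
end

section
/- Let s₁, s₂, s₃, s₄, s₅, s₆ be the 4×4 complex matrices with rows, respectively: s₁ = ((0,−1,0,0),(−1,0,0,0),(0,0,1,0),(0,0,0,1)); s₂ = ((0,1,0,0),(1,0,0,0),(0,0,1,0),(0,0,0,1)); s₃ = ((1,0,0,0),(0,1,0,0),(0,0,0,−1),(0,0,−1,0)); s₄ = ((1,0,0,0),(0,1,0,0),(0,0,0,1),(0,0,1,0)); s₅ = ((0,0,−1,0),(0,1,0,0),(−1,0,0,0),(0,0,0,1)); s₆ = ((0,0,1,0),(0,−1,0,0),(1,0,0,0),(0,0,0,−1)). Then: (i) each sᵢ lies in the group G(2,2,4) ⊆ GL₄(ℂ); (ii) s₁s₂s₃s₄s₅s₆ = Id; (iii) s₁, s₂, s₃, s₄, s₅ are pseudoreflections and −s₆ is a pseudoreflection; and (iv) s₁, …, s₆ generate G(2,2,4). -/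
open scoped MatrixGroups

/-- An element of `GL_r(ℂ)` (here, viewed as a matrix) is a pseudoreflection
if `g - Id` has rank 1. -/
def IsPseudoreflection {r : ℕ} (g : Matrix (Fin r) (Fin r) ℂ) : Prop :=
  (g - 1).rank = 1

/-- The complex reflection group `G(m,p,N)`: monomial `N × N` matrices whose
nonzero entries are `m`-th roots of unity, and such that the product of the
nonzero entries is an `(m/p)`-th root of unity. -/
def GmpN (m p N : ℕ) : Set (Matrix (Fin N) (Fin N) ℂ) :=
  {g | ∃ (σ : Equiv.Perm (Fin N)) (f : Fin N → ℂ),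
    (∀ j, f j ^ m = 1) ∧ (∏ j, f j) ^ (m / p) = 1 ∧
    ∀ i j, g i j = if i = σ j then f j else 0}

/-- The six explicit elements of `G(2,2,4) = W(D₄)`. -/
def s10 : Fin 6 → Matrix (Fin 4) (Fin 4) ℂ :=
  ![!![0,-1,0,0; -1,0,0,0; 0,0,1,0; 0,0,0,1],
    !![0,1,0,0; 1,0,0,0; 0,0,1,0; 0,0,0,1],
    !![1,0,0,0; 0,1,0,0; 0,0,0,-1; 0,0,-1,0],
    !![1,0,0,0; 0,1,0,0; 0,0,0,1; 0,0,1,0],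
    !![0,0,-1,0; 0,1,0,0; -1,0,0,0; 0,0,0,1],
    !![0,0,1,0; 0,-1,0,0; 1,0,0,0; 0,0,0,-1]]

namespace Stmt10Aux

open Matrix Equiv

abbrev M4 := Matrix (Fin 4) (Fin 4) ℂ

/-- signed permutation matrix -/
def sp (σ : Equiv.Perm (Fin 4)) (f : Fin 4 → ℂ) : M4 :=
  Matrix.of fun i j => if i = σ j then f j else 0

lemma sp_mul (σ τ : Equiv.Perm (Fin 4)) (f g : Fin 4 → ℂ) :
    sp σ f * sp τ g = sp (σ * τ) (fun j => f (τ j) * g j) := by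
  ext i j
  simp only [Matrix.mul_apply, sp, Matrix.of_apply]
  rw [Finset.sum_eq_single (τ j)]
  · by_cases h : i = σ (τ j) <;> simp [h, Equiv.Perm.mul_apply]
  · intro k _ hk; simp [hk]
  · simp

lemma sp_one : sp 1 (fun _ => 1) = 1 := by
  ext i j; by_cases h : i = j <;> simp [sp, Matrix.one_apply, h]

lemma sp_eq_of {σ τ : Equiv.Perm (Fin 4)} {f g : Fin 4 → ℂ}
    (h1 : σ = τ) (h2 : ∀ j, f j = g j) : sp σ f = sp τ g := by
  subst h1; rw [show f = g from funext h2]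

def sg : Fin 6 → Equiv.Perm (Fin 4) :=
  ![Equiv.swap 0 1, Equiv.swap 0 1, Equiv.swap 2 3, Equiv.swap 2 3, Equiv.swap 0 2, Equiv.swap 0 2]
def fg : Fin 6 → Fin 4 → ℂ :=
  ![![-1,-1,1,1], ![1,1,1,1], ![1,1,-1,-1], ![1,1,1,1], ![-1,1,-1,1], ![1,-1,1,-1]]

lemma s10_eq (i : Fin 6) : s10 i = sp (sg i) (fg i) := by
  fin_cases i <;>
    · ext a b
      fin_cases a <;> fin_cases b <;> rfl

lemma fg_sq (i : Fin 6) (j : Fin 4) : fg i j * fg i j = 1 := by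
  fin_cases i <;> fin_cases j <;> norm_num [fg]

lemma fg_prod (i : Fin 6) : (∏ j, fg i j) = 1 := by
  fin_cases i <;> norm_num [fg, Fin.prod_univ_four, Matrix.cons_val_two, Matrix.cons_val_three, Matrix.vecHead, Matrix.vecTail]

/-- signed permutation unit -/
def spU (σ : Equiv.Perm (Fin 4)) (f : Fin 4 → ℂ) (hf : ∀ j, f j * f j = 1) :
    GL (Fin 4) ℂ where
  val := sp σ f
  inv := sp σ⁻¹ (fun j => f (σ⁻¹ j))
  val_inv := by
    rw [sp_mul, sp_eq_of (mul_inv_cancel σ) (fun j => hf (σ⁻¹ j)), sp_one]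
  inv_val := by
    rw [sp_mul]
    rw [sp_eq_of (inv_mul_cancel σ) (g := fun _ => 1) (fun j => by
      simp only [show ∀ x, σ⁻¹ (σ x) = x from σ.symm_apply_apply]; exact hf j), sp_one]

@[simp] lemma spU_coe (σ f hf) : ((spU σ f hf : GL (Fin 4) ℂ) : M4) = sp σ f := rfl

def Sgen : Fin 6 → GL (Fin 4) ℂ := fun i => spU (sg i) (fg i) (fg_sq i)

def Kcl : Subgroup (GL (Fin 4) ℂ) := Subgroup.closure (Set.range Sgen)

lemma memK_of_eq {a b : GL (Fin 4) ℂ} (h : (a : M4) = (b : M4)) (hb : b ∈ Kcl) : a ∈ Kcl := by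
  rwa [Units.ext h]

lemma memK_of_eq_mul {a b c : GL (Fin 4) ℂ} (hb : b ∈ Kcl) (hc : c ∈ Kcl)
    (h : (a : M4) = (b : M4) * (c : M4)) : a ∈ Kcl := by
  have : a = b * c := Units.ext (by rw [h, Units.val_mul])
  rw [this]; exact mul_mem hb hc

lemma Sgen_mem (i : Fin 6) : Sgen i ∈ Kcl := Subgroup.subset_closure ⟨i, rfl⟩

lemma sp_mul_eq {σ τ ρ : Equiv.Perm (Fin 4)} {f g h : Fin 4 → ℂ}
    (h1 : ρ = σ * τ) (h2 : ∀ j, h j = f (τ j) * g j) : sp ρ h = sp σ f * sp τ g := by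
  rw [sp_mul]; exact sp_eq_of h1 h2

-- diagonal units
lemma d01_mem (hf) : spU 1 ![-1,-1,1,1] hf ∈ Kcl := by
  refine memK_of_eq_mul (Sgen_mem 0) (Sgen_mem 1) ?_
  show sp 1 ![-1,-1,1,1] = sp (Equiv.swap 0 1) ![-1,-1,1,1] * sp (Equiv.swap 0 1) ![1,1,1,1]
  exact sp_mul_eq (by decide)
    (by intro j; fin_cases j <;>
      simp (config := { decide := true }) [sg, fg, Equiv.swap_apply_def] <;> norm_num)

lemma d23_mem (hf) : spU 1 ![1,1,-1,-1] hf ∈ Kcl := by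
  refine memK_of_eq_mul (Sgen_mem 2) (Sgen_mem 3) ?_
  show sp 1 ![1,1,-1,-1] = sp (Equiv.swap 2 3) ![1,1,-1,-1] * sp (Equiv.swap 2 3) ![1,1,1,1]
  exact sp_mul_eq (by decide)
    (by intro j; fin_cases j <;>
      simp (config := { decide := true }) [sg, fg, Equiv.swap_apply_def] <;> norm_num)

lemma pmtac4 : ∀ j : Fin 4, (![-1,-1,1,1] : Fin 4 → ℂ) j * ![-1,-1,1,1] j = 1 := by
  intro j; fin_cases j <;> norm_num

lemma w_mem (hf) : spU (Equiv.swap 0 2) ![-1,-1,1,1] hf ∈ Kcl := by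
  refine memK_of_eq_mul (d01_mem pmtac4) (Sgen_mem 4) ?_
  show sp (Equiv.swap 0 2) ![-1,-1,1,1] = sp 1 ![-1,-1,1,1] * sp (Equiv.swap 0 2) ![-1,1,-1,1]
  exact sp_mul_eq (by decide)
    (by intro j; fin_cases j <;>
      simp (config := { decide := true }) [sg, fg, Equiv.swap_apply_def] <;> norm_num)

lemma d12_mem (hf) : spU 1 ![1,-1,-1,1] hf ∈ Kcl := by
  refine memK_of_eq_mul (Sgen_mem 4) (w_mem pmtac4) ?_
  show sp 1 ![1,-1,-1,1] = sp (Equiv.swap 0 2) ![-1,1,-1,1] * sp (Equiv.swap 0 2) ![-1,-1,1,1]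
  exact sp_mul_eq (by decide)
    (by intro j; fin_cases j <;>
      simp (config := { decide := true }) [sg, fg, Equiv.swap_apply_def] <;> norm_num)

lemma pm12 : ∀ j : Fin 4, (![1,-1,-1,1] : Fin 4 → ℂ) j * ![1,-1,-1,1] j = 1 := by
  intro j; fin_cases j <;> norm_num

lemma d02_mem (hf) : spU 1 ![-1,1,-1,1] hf ∈ Kcl := by
  refine memK_of_eq_mul (d01_mem pmtac4) (d12_mem pm12) ?_
  show sp 1 ![-1,1,-1,1] = sp 1 ![-1,-1,1,1] * sp 1 ![1,-1,-1,1]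
  exact sp_mul_eq (by decide)
    (by intro j; fin_cases j <;>
      simp (config := { decide := true }) [sg, fg, Equiv.swap_apply_def] <;> norm_num)

lemma pm23 : ∀ j : Fin 4, (![1,1,-1,-1] : Fin 4 → ℂ) j * ![1,1,-1,-1] j = 1 := by
  intro j; fin_cases j <;> norm_num

lemma d13_mem (hf) : spU 1 ![1,-1,1,-1] hf ∈ Kcl := by
  refine memK_of_eq_mul (d23_mem pm23) (d12_mem pm12) ?_
  show sp 1 ![1,-1,1,-1] = sp 1 ![1,1,-1,-1] * sp 1 ![1,-1,-1,1]
  exact sp_mul_eq (by decide)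
    (by intro j; fin_cases j <;>
      simp (config := { decide := true }) [sg, fg, Equiv.swap_apply_def] <;> norm_num)

lemma pm13 : ∀ j : Fin 4, (![1,-1,1,-1] : Fin 4 → ℂ) j * ![1,-1,1,-1] j = 1 := by
  intro j; fin_cases j <;> norm_num

lemma d03_mem (hf) : spU 1 ![-1,1,1,-1] hf ∈ Kcl := by
  refine memK_of_eq_mul (d01_mem pmtac4) (d13_mem pm13) ?_
  show sp 1 ![-1,1,1,-1] = sp 1 ![-1,-1,1,1] * sp 1 ![1,-1,1,-1]
  exact sp_mul_eq (by decide)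
    (by intro j; fin_cases j <;>
      simp (config := { decide := true }) [sg, fg, Equiv.swap_apply_def] <;> norm_num)

lemma dneg_mem (hf) : spU 1 ![-1,-1,-1,-1] hf ∈ Kcl := by
  refine memK_of_eq_mul (d01_mem pmtac4) (d23_mem pm23) ?_
  show sp 1 ![-1,-1,-1,-1] = sp 1 ![-1,-1,1,1] * sp 1 ![1,1,-1,-1]
  exact sp_mul_eq (by decide)
    (by intro j; fin_cases j <;>
      simp (config := { decide := true }) [sg, fg, Equiv.swap_apply_def] <;> norm_num)

lemma pm02 : ∀ j : Fin 4, (![-1,1,-1,1] : Fin 4 → ℂ) j * ![-1,1,-1,1] j = 1 := by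
  intro j; fin_cases j <;> norm_num

lemma pm03 : ∀ j : Fin 4, (![-1,1,1,-1] : Fin 4 → ℂ) j * ![-1,1,1,-1] j = 1 := by
  intro j; fin_cases j <;> norm_num

lemma pmneg : ∀ j : Fin 4, (![-1,-1,-1,-1] : Fin 4 → ℂ) j * ![-1,-1,-1,-1] j = 1 := by
  intro j; fin_cases j <;> norm_num

lemma funext4 {f : Fin 4 → ℂ} {a b c d : ℂ}
    (h0 : f 0 = a) (h1 : f 1 = b) (h2 : f 2 = c) (h3 : f 3 = d) :
    ∀ j, f j = ![a,b,c,d] j := by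
  intro j
  fin_cases j
  · exact h0
  · exact h1
  · exact h2
  · exact h3

-- permutation units
def pU (σ : Equiv.Perm (Fin 4)) : GL (Fin 4) ℂ :=
  spU σ (fun _ => 1) (fun _ => one_mul 1)

@[simp] lemma pU_coe (σ) : ((pU σ : GL (Fin 4) ℂ) : M4) = sp σ (fun _ => 1) := rfl

lemma p01_mem : pU (Equiv.swap 0 1) ∈ Kcl := by
  refine memK_of_eq ?_ (Sgen_mem 1)
  show sp (Equiv.swap 0 1) (fun _ => 1) = sp (Equiv.swap 0 1) ![1,1,1,1]
  exact sp_eq_of (by decide) (by intro j; fin_cases j <;> norm_num [fg])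

lemma p23_mem : pU (Equiv.swap 2 3) ∈ Kcl := by
  refine memK_of_eq ?_ (Sgen_mem 3)
  show sp (Equiv.swap 2 3) (fun _ => 1) = sp (Equiv.swap 2 3) ![1,1,1,1]
  exact sp_eq_of (by decide) (by intro j; fin_cases j <;> norm_num [fg])

lemma p02_mem : pU (Equiv.swap 0 2) ∈ Kcl := by
  refine memK_of_eq_mul (Sgen_mem 4) (d02_mem pm02) ?_
  show sp (Equiv.swap 0 2) (fun _ => 1) = sp (Equiv.swap 0 2) ![-1,1,-1,1] * sp 1 ![-1,1,-1,1]
  exact sp_mul_eq (by decide)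
    (by intro j; fin_cases j <;>
      simp (config := { decide := true }) [sg, fg, Equiv.swap_apply_def] <;> norm_num)

lemma u1_mem : pU (Equiv.swap 0 2 * Equiv.swap 0 1) ∈ Kcl := by
  refine memK_of_eq_mul p02_mem p01_mem ?_
  show sp (Equiv.swap 0 2 * Equiv.swap 0 1) (fun _ => 1)
      = sp (Equiv.swap 0 2) (fun _ => 1) * sp (Equiv.swap 0 1) (fun _ => 1)
  exact sp_mul_eq (by decide)
    (by intro j; fin_cases j <;>
      simp (config := { decide := true }) [sg, fg, Equiv.swap_apply_def] <;> norm_num)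

lemma p12_mem : pU (Equiv.swap 1 2) ∈ Kcl := by
  refine memK_of_eq_mul p01_mem u1_mem ?_
  show sp (Equiv.swap 1 2) (fun _ => 1)
      = sp (Equiv.swap 0 1) (fun _ => 1) * sp (Equiv.swap 0 2 * Equiv.swap 0 1) (fun _ => 1)
  exact sp_mul_eq (by decide)
    (by intro j; fin_cases j <;>
      simp (config := { decide := true }) [sg, fg, Equiv.swap_apply_def] <;> norm_num)

lemma u2_mem : pU (Equiv.swap 2 3 * Equiv.swap 0 2) ∈ Kcl := by
  refine memK_of_eq_mul p23_mem p02_mem ?_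
  show sp (Equiv.swap 2 3 * Equiv.swap 0 2) (fun _ => 1)
      = sp (Equiv.swap 2 3) (fun _ => 1) * sp (Equiv.swap 0 2) (fun _ => 1)
  exact sp_mul_eq (by decide)
    (by intro j; fin_cases j <;>
      simp (config := { decide := true }) [sg, fg, Equiv.swap_apply_def] <;> norm_num)

lemma p03_mem : pU (Equiv.swap 0 3) ∈ Kcl := by
  refine memK_of_eq_mul p02_mem u2_mem ?_
  show sp (Equiv.swap 0 3) (fun _ => 1)
      = sp (Equiv.swap 0 2) (fun _ => 1) * sp (Equiv.swap 2 3 * Equiv.swap 0 2) (fun _ => 1)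
  exact sp_mul_eq (by decide)
    (by intro j; fin_cases j <;>
      simp (config := { decide := true }) [sg, fg, Equiv.swap_apply_def] <;> norm_num)

lemma u3_mem : pU (Equiv.swap 0 3 * Equiv.swap 0 1) ∈ Kcl := by
  refine memK_of_eq_mul p03_mem p01_mem ?_
  show sp (Equiv.swap 0 3 * Equiv.swap 0 1) (fun _ => 1)
      = sp (Equiv.swap 0 3) (fun _ => 1) * sp (Equiv.swap 0 1) (fun _ => 1)
  exact sp_mul_eq (by decide)
    (by intro j; fin_cases j <;>
      simp (config := { decide := true }) [sg, fg, Equiv.swap_apply_def] <;> norm_num)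

lemma p13_mem : pU (Equiv.swap 1 3) ∈ Kcl := by
  refine memK_of_eq_mul p01_mem u3_mem ?_
  show sp (Equiv.swap 1 3) (fun _ => 1)
      = sp (Equiv.swap 0 1) (fun _ => 1) * sp (Equiv.swap 0 3 * Equiv.swap 0 1) (fun _ => 1)
  exact sp_mul_eq (by decide)
    (by intro j; fin_cases j <;>
      simp (config := { decide := true }) [sg, fg, Equiv.swap_apply_def] <;> norm_num)

lemma swap_mem (x y : Fin 4) (hxy : x ≠ y) : pU (Equiv.swap x y) ∈ Kcl := by
  fin_cases x <;> fin_cases y <;>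
    first
    | exact absurd rfl hxy
    | exact memK_of_eq (b := pU (Equiv.swap 0 1)) (sp_eq_of (by decide) (fun _ => rfl)) p01_mem
    | exact memK_of_eq (b := pU (Equiv.swap 2 3)) (sp_eq_of (by decide) (fun _ => rfl)) p23_mem
    | exact memK_of_eq (b := pU (Equiv.swap 0 2)) (sp_eq_of (by decide) (fun _ => rfl)) p02_mem
    | exact memK_of_eq (b := pU (Equiv.swap 1 2)) (sp_eq_of (by decide) (fun _ => rfl)) p12_mem
    | exact memK_of_eq (b := pU (Equiv.swap 0 3)) (sp_eq_of (by decide) (fun _ => rfl)) p03_mem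
    | exact memK_of_eq (b := pU (Equiv.swap 1 3)) (sp_eq_of (by decide) (fun _ => rfl)) p13_mem

lemma pU_mem (σ : Equiv.Perm (Fin 4)) : pU σ ∈ Kcl := by
  induction σ using Equiv.Perm.swap_induction_on
  case _ =>
      refine memK_of_eq ?_ (one_mem Kcl)
      show sp 1 (fun _ => 1) = ((1 : GL (Fin 4) ℂ) : M4)
      rw [Units.val_one, sp_one]
  case _ τ x y hxy ih =>
      refine memK_of_eq_mul (swap_mem x y hxy) ih ?_
      show sp (Equiv.swap x y * τ) (fun _ => 1)
          = sp (Equiv.swap x y) (fun _ => 1) * sp τ (fun _ => 1)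
      rw [sp_mul]
      exact sp_eq_of rfl (fun j => (one_mul 1).symm)

lemma dU_mem (f : Fin 4 → ℂ) (hf : ∀ j, f j * f j = 1) (hp : (∏ j, f j) = 1) :
    spU 1 f hf ∈ Kcl := by
  have key : ∀ j, f j = 1 ∨ f j = -1 := by
    intro j
    rcases mul_eq_zero.mp (show (f j - 1) * (f j + 1) = 0 by linear_combination hf j) with h | h
    · exact Or.inl (sub_eq_zero.mp h)
    · exact Or.inr (eq_neg_of_add_eq_zero_left h)
  rw [Fin.prod_univ_four] at hp
  rcases key 0 with h0 | h0 <;> rcases key 1 with h1 | h1 <;>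
    rcases key 2 with h2 | h2 <;> rcases key 3 with h3 | h3 <;>
    rw [h0, h1, h2, h3] at hp <;>
    [skip; exact absurd hp (by norm_num); exact absurd hp (by norm_num); skip;
     exact absurd hp (by norm_num); skip; skip; exact absurd hp (by norm_num);
     exact absurd hp (by norm_num); skip; skip; exact absurd hp (by norm_num);
     skip; exact absurd hp (by norm_num); exact absurd hp (by norm_num); skip] <;>
    first
    | · refine memK_of_eq ?_ (one_mem Kcl)
        show sp 1 f = ((1 : GL (Fin 4) ℂ) : M4)
        rw [Units.val_one, ← sp_one]
        refine sp_eq_of rfl ?_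
        intro j
        fin_cases j
        · exact h0
        · exact h1
        · exact h2
        · exact h3
    | · refine memK_of_eq ?_ (d01_mem pmtac4)
        show sp 1 f = sp 1 ![-1,-1,1,1]
        exact sp_eq_of rfl (funext4 h0 h1 h2 h3)
    | · refine memK_of_eq ?_ (d23_mem pm23)
        show sp 1 f = sp 1 ![1,1,-1,-1]
        exact sp_eq_of rfl (funext4 h0 h1 h2 h3)
    | · refine memK_of_eq ?_ (d12_mem pm12)
        show sp 1 f = sp 1 ![1,-1,-1,1]
        exact sp_eq_of rfl (funext4 h0 h1 h2 h3)
    | · refine memK_of_eq ?_ (d02_mem pm02)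
        show sp 1 f = sp 1 ![-1,1,-1,1]
        exact sp_eq_of rfl (funext4 h0 h1 h2 h3)
    | · refine memK_of_eq ?_ (d13_mem pm13)
        show sp 1 f = sp 1 ![1,-1,1,-1]
        exact sp_eq_of rfl (funext4 h0 h1 h2 h3)
    | · refine memK_of_eq ?_ (d03_mem pm03)
        show sp 1 f = sp 1 ![-1,1,1,-1]
        exact sp_eq_of rfl (funext4 h0 h1 h2 h3)
    | · refine memK_of_eq ?_ (dneg_mem pmneg)
        show sp 1 f = sp 1 ![-1,-1,-1,-1]
        exact sp_eq_of rfl (funext4 h0 h1 h2 h3)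

lemma mem_of (g : GL (Fin 4) ℂ) (σ : Equiv.Perm (Fin 4)) (f : Fin 4 → ℂ)
    (hf : ∀ j, f j * f j = 1) (hp : (∏ j, f j) = 1) (h : (g : M4) = sp σ f) :
    g ∈ Kcl := by
  refine memK_of_eq_mul (pU_mem σ) (dU_mem f hf hp) ?_
  rw [h]
  show sp σ f = sp σ (fun _ => 1) * sp 1 f
  rw [sp_mul]
  exact sp_eq_of (by rw [mul_one]) (fun j => by simp)

lemma coe_mem_of_mem {g : GL (Fin 4) ℂ} (hg : g ∈ Kcl) :
    ∃ (σ : Equiv.Perm (Fin 4)) (f : Fin 4 → ℂ),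
      (∀ j, f j * f j = 1) ∧ (∏ j, f j) = 1 ∧ (g : M4) = sp σ f := by
  induction hg using Subgroup.closure_induction with
  | mem x hx =>
      obtain ⟨i, rfl⟩ := hx
      exact ⟨sg i, fg i, fg_sq i, fg_prod i, rfl⟩
  | one =>
      exact ⟨1, fun _ => 1, fun _ => one_mul 1, by simp, by rw [Units.val_one, sp_one]⟩
  | mul x y hx hy ihx ihy =>
      obtain ⟨σ, f, hf, hp, h⟩ := ihx
      obtain ⟨τ, k, hk, hq, h2⟩ := ihy
      refine ⟨σ * τ, fun j => f (τ j) * k j, ?_, ?_, ?_⟩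
      · intro j; rw [mul_mul_mul_comm, hf (τ j), hk j, one_mul]
      · rw [Finset.prod_mul_distrib, Equiv.prod_comp τ f, hp, hq, one_mul]
      · rw [Units.val_mul, h, h2, sp_mul]
  | inv x hx ihx =>
      obtain ⟨σ, f, hf, hp, h⟩ := ihx
      refine ⟨σ⁻¹, fun j => f (σ⁻¹ j), fun j => hf _, ?_, ?_⟩
      · rw [Equiv.prod_comp σ⁻¹ f]; exact hp
      · have hinv : sp σ f * sp σ⁻¹ (fun j => f (σ⁻¹ j)) = 1 := by
          rw [sp_mul, sp_eq_of (mul_inv_cancel σ) (fun j => hf (σ⁻¹ j)), sp_one]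
        rw [Matrix.coe_units_inv, h]
        exact Matrix.inv_eq_right_inv hinv

lemma rank_one_of (A : M4) (u v : Fin 4 → ℂ)
    (hA : ∀ i j, A i j = u i * v j) (i0 j0 : Fin 4) (h0 : A i0 j0 ≠ 0) : A.rank = 1 := by
  refine le_antisymm ?_ ?_
  · have hfac : A = (Matrix.of fun i (_ : Fin 1) => u i) * (Matrix.of fun (_ : Fin 1) j => v j) := by
      ext i j; simp [Matrix.mul_apply, hA]
    rw [hfac]
    refine (Matrix.rank_mul_le_left _ _).trans ?_
    simpa using Matrix.rank_le_card_width (Matrix.of fun i (_ : Fin 1) => u i)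
  · have hmem : A.mulVec (Pi.single j0 1) ∈ LinearMap.range A.mulVecLin :=
      ⟨Pi.single j0 1, by simp [Matrix.mulVecLin_apply]⟩
    have hne : A.mulVec (Pi.single j0 1) ≠ 0 := by
      intro hzero
      apply h0
      have := congrFun hzero i0
      simpa [Matrix.mulVec_single] using this
    have hnt : Nontrivial (LinearMap.range A.mulVecLin) :=
      nontrivial_of_ne ⟨_, hmem⟩ 0 (by simpa [Subtype.ext_iff] using hne)
    have hpos : 0 < Module.finrank ℂ (LinearMap.range A.mulVecLin) :=
      Module.finrank_pos_iff.mpr hnt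
    exact hpos

end Stmt10Aux

open Stmt10Aux in
theorem stmt10 :
    (∀ i, s10 i ∈ GmpN 2 2 4) ∧
    s10 0 * s10 1 * s10 2 * s10 3 * s10 4 * s10 5 = 1 ∧
    (∀ i : Fin 6, (i : ℕ) < 5 → IsPseudoreflection (s10 i)) ∧
    IsPseudoreflection (-(s10 5)) ∧
    (∃ S : Fin 6 → GL (Fin 4) ℂ,
      (∀ i, (S i : Matrix (Fin 4) (Fin 4) ℂ) = s10 i) ∧
      ∀ g : GL (Fin 4) ℂ, g ∈ Subgroup.closure (Set.range S) ↔
        (g : Matrix (Fin 4) (Fin 4) ℂ) ∈ GmpN 2 2 4) := by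
  refine ⟨?_, ?_, ?_, ?_, ?_⟩
  · intro i
    rw [s10_eq]
    exact ⟨sg i, fg i, fun j => by rw [pow_two]; exact fg_sq i j,
      by norm_num [fg_prod i], fun a b => rfl⟩
  · have e0 : s10 0 = sp (Equiv.swap 0 1) ![-1,-1,1,1] := s10_eq 0
    have e1 : s10 1 = sp (Equiv.swap 0 1) ![1,1,1,1] := s10_eq 1
    have e2 : s10 2 = sp (Equiv.swap 2 3) ![1,1,-1,-1] := s10_eq 2
    have e3 : s10 3 = sp (Equiv.swap 2 3) ![1,1,1,1] := s10_eq 3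
    have e4 : s10 4 = sp (Equiv.swap 0 2) ![-1,1,-1,1] := s10_eq 4
    have e5 : s10 5 = sp (Equiv.swap 0 2) ![1,-1,1,-1] := s10_eq 5
    rw [e0, e1, e2, e3, e4, e5, sp_mul, sp_mul, sp_mul, sp_mul, sp_mul]
    exact (sp_eq_of (by decide)
      (by intro j; fin_cases j <;>
        simp (config := { decide := true }) [Equiv.swap_apply_def] <;> norm_num)).trans sp_one
  · intro i hi
    have key : ∀ (k : Fin 6) (u v : Fin 4 → ℂ),
        (∀ a b, s10 k a b - (if a = b then (1:ℂ) else 0) = u a * v b) →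
        ∀ (i0 j0 : Fin 4), u i0 * v j0 ≠ 0 → IsPseudoreflection (s10 k) := by
      intro k u v hk i0 j0 hne
      refine rank_one_of _ u v (fun a b => ?_) i0 j0 (by rw [show (s10 k - 1) i0 j0 = s10 k i0 j0 - (if i0 = j0 then (1:ℂ) else 0) from rfl, hk]; exact hne)
      rw [show (s10 k - 1) a b = s10 k a b - (if a = b then (1:ℂ) else 0) from rfl, hk]
    fin_cases i
    · exact key 0 ![1,1,0,0] ![-1,-1,0,0]
        (by intro a b; fin_cases a <;> fin_cases b <;>
          norm_num [s10, Fin.ext_iff]) 0 0 (by norm_num)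
    · exact key 1 ![1,-1,0,0] ![-1,1,0,0]
        (by intro a b; fin_cases a <;> fin_cases b <;>
          norm_num [s10, Fin.ext_iff]) 0 0 (by norm_num)
    · exact key 2 ![0,0,1,1] ![0,0,-1,-1]
        (by intro a b; fin_cases a <;> fin_cases b <;>
          simp [s10, Fin.ext_iff] <;> norm_num) 2 2 (by norm_num [Matrix.cons_val_two, Matrix.vecHead, Matrix.vecTail])
    · exact key 3 ![0,0,1,-1] ![0,0,-1,1]
        (by intro a b; fin_cases a <;> fin_cases b <;>
          simp [s10, Fin.ext_iff] <;> norm_num) 2 2 (by norm_num [Matrix.cons_val_two, Matrix.vecHead, Matrix.vecTail])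
    · exact key 4 ![1,0,1,0] ![-1,0,-1,0]
        (by intro a b; fin_cases a <;> fin_cases b <;>
          simp [s10, Fin.ext_iff] <;> norm_num) 0 0 (by norm_num)
    · norm_num at hi
  · have e5 : s10 5 = sp (Equiv.swap 0 2) ![1,-1,1,-1] := s10_eq 5
    rw [IsPseudoreflection, e5]
    refine rank_one_of _ ![1,0,1,0] ![-1,0,-1,0] (fun a b => ?_) 0 0 ?_
    · rw [show (-(sp (Equiv.swap 0 2) ![1,-1,1,-1]) - 1) a b
          = -(sp (Equiv.swap 0 2) ![1,-1,1,-1] a b) - (if a = b then (1:ℂ) else 0) from rfl]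
      fin_cases a <;> fin_cases b <;>
        simp (config := { decide := true }) [sp, Equiv.swap_apply_def] <;> norm_num
    · rw [show (-(sp (Equiv.swap 0 2) ![1,-1,1,-1]) - 1) 0 0
          = -(sp (Equiv.swap 0 2) ![1,-1,1,-1] 0 0) - (if (0:Fin 4) = 0 then (1:ℂ) else 0) from rfl]
      simp (config := { decide := true }) [sp, Equiv.swap_apply_def]
  · refine ⟨Sgen, fun i => (s10_eq i).symm, fun g => ?_⟩
    constructor
    · intro hg
      obtain ⟨σ, f, hf, hp, h⟩ := coe_mem_of_mem hg
      exact ⟨σ, f, fun j => by rw [pow_two]; exact hf j, by norm_num [hp],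
        fun a b => by rw [h]; rfl⟩
    · rintro ⟨σ, f, hf2, hp2, hent⟩
      refine mem_of g σ f (fun j => by have := hf2 j; rwa [pow_two] at this) ?_
        (by ext a b; rw [hent]; rfl)
      have := hp2
      norm_num at this
      exact this
end
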